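/- As ε → ∞, the unique minimizer P_ε of the entropic regularized OT problem converges to the independent coupling a bᵀ, i.e., (P_ε)_{ij} → a_i b_j for all i, j. -/

import Mathlib

open Finset Real Filter

noncomputable def entropy {n m : ℕ} (P : Matrix (Fin n) (Fin m) ℝ) : ℝ :=
  -∑ i, ∑ j, P i j * (Real.log (P i j) - 1)

def couplings {n m : ℕ} (a : Fin n → ℝ) (b : Fin m → ℝ) :
    Set (Matrix (Fin n) (Fin m) ℝ) :=
  {P | (∀ i j, 0 ≤ P i j) ∧ (∀ i, ∑ j, P i j = a i) ∧ (∀ j, ∑ i, P i j = b j)}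

noncomputable def dotp {n m : ℕ} (P C : Matrix (Fin n) (Fin m) ℝ) : ℝ :=
  ∑ i, ∑ j, P i j * C i j


lemma two_log_le_sub_inv {u : ℝ} (hu : 1 ≤ u) : 2 * Real.log u ≤ u - u⁻¹ := by
  have hd : ∀ x ∈ Set.Ici (1:ℝ), HasDerivAt (fun y : ℝ => y - y⁻¹ - 2 * Real.log y)
      (1 - (-(x ^ 2)⁻¹) - 2 * x⁻¹) x := by
    intro x hx
    have hx0 : x ≠ 0 := by simp only [Set.mem_Ici] at hx; positivity
    exact ((hasDerivAt_id x).sub (hasDerivAt_inv hx0)).sub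
      ((Real.hasDerivAt_log hx0).const_mul 2)
  have H : MonotoneOn (fun y : ℝ => y - y⁻¹ - 2 * Real.log y) (Set.Ici 1) := by
    apply monotoneOn_of_deriv_nonneg (convex_Ici 1)
    · exact fun x hx => ((hd x hx).continuousAt).continuousWithinAt
    · intro x hx
      rw [interior_Ici, Set.mem_Ioi] at hx
      exact ((hd x (Set.mem_Ici.2 (le_of_lt hx))).differentiableAt).differentiableWithinAt
    · intro x hx
      rw [interior_Ici, Set.mem_Ioi] at hx
      rw [(hd x (Set.mem_Ici.2 (le_of_lt hx))).deriv]
      have hx0 : (0:ℝ) < x := lt_trans one_pos hx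
      have h1 : (x ^ 2)⁻¹ = x⁻¹ ^ 2 := by rw [inv_pow]
      nlinarith [sq_nonneg (1 - x⁻¹), inv_pos.2 hx0]
  have := H (Set.self_mem_Ici) (Set.mem_Ici.2 hu) hu
  simp only [Real.log_one, inv_one] at this
  linarith

lemma pade_le_log {t : ℝ} (ht : 1 ≤ t) : 2 * (t - 1) / (t + 1) ≤ Real.log t := by
  have hd : ∀ x ∈ Set.Ici (1:ℝ), HasDerivAt (fun y : ℝ => Real.log y + 4 * (y + 1)⁻¹)
      (x⁻¹ + 4 * (-1 / (x + 1) ^ 2)) x := by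
    intro x hx
    simp only [Set.mem_Ici] at hx
    have hx0 : x ≠ 0 := by positivity
    have hx1 : x + 1 ≠ 0 := by positivity
    exact (Real.hasDerivAt_log hx0).add
      ((((hasDerivAt_id x).add_const 1).inv hx1).const_mul 4)
  have H : MonotoneOn (fun y : ℝ => Real.log y + 4 * (y + 1)⁻¹) (Set.Ici 1) := by
    apply monotoneOn_of_deriv_nonneg (convex_Ici 1)
    · exact fun x hx => ((hd x hx).continuousAt).continuousWithinAt
    · intro x hx
      rw [interior_Ici, Set.mem_Ioi] at hx
      exact ((hd x (Set.mem_Ici.2 (le_of_lt hx))).differentiableAt).differentiableWithinAt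
    · intro x hx
      rw [interior_Ici, Set.mem_Ioi] at hx
      rw [(hd x (Set.mem_Ici.2 (le_of_lt hx))).deriv]
      have hx0 : (0:ℝ) < x := lt_trans one_pos hx
      have hx1 : (0:ℝ) < (x + 1) ^ 2 := by positivity
      have key : 4 * x ≤ 1 * (x + 1) ^ 2 := by nlinarith [sq_nonneg (x - 1)]
      have h2 : 4 / (x + 1) ^ 2 ≤ 1 / x := by
        rw [div_le_div_iff₀ hx1 hx0]; linarith
      have h3 : x⁻¹ + 4 * (-1 / (x + 1) ^ 2) = 1 / x - 4 / (x + 1) ^ 2 := by ring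
      linarith
  have := H (Set.self_mem_Ici) (Set.mem_Ici.2 ht) ht
  simp only [Real.log_one] at this
  have ht1 : (0:ℝ) < t + 1 := by linarith
  rw [div_le_iff₀ ht1]
  have h4 : (4:ℝ) * (1 + 1)⁻¹ = 2 := by norm_num
  rw [h4] at this
  have h5 : 4 * (t + 1)⁻¹ = 4 / (t + 1) := by rw [div_eq_mul_inv]
  rw [h5] at this
  have h6 : 4 / (t + 1) * (t + 1) = 4 := by field_simp
  nlinarith [mul_le_mul_of_nonneg_right this (le_of_lt ht1)]

lemma key_ineq {x y : ℝ} (hx0 : 0 ≤ x) (hx1 : x ≤ 1) (hy0 : 0 < y) (hy1 : y ≤ 1) :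
    (x - y) ^ 2 / 2 ≤ x * Real.log x - y * Real.log y - (Real.log y + 1) * (x - y) := by
  rcases eq_or_lt_of_le hx0 with h0 | hx0'
  · rw [← h0]
    simp only [Real.log_zero, mul_zero, zero_mul, zero_sub]
    nlinarith [mul_nonneg hy0.le (sub_nonneg.2 hy1)]
  · have hrw : x * Real.log x - y * Real.log y - (Real.log y + 1) * (x - y)
        = x * (Real.log x - Real.log y) - x + y := by ring
    rw [hrw]
    rcases le_total x y with hxy | hxy
    · -- x ≤ y : use two_log_le_sub_inv with u = y / x
      have hu : 1 ≤ y / x := (one_le_div hx0').2 hxy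
      have h := two_log_le_sub_inv hu
      rw [Real.log_div hy0.ne' hx0'.ne', inv_div] at h
      -- h : 2 * (log y - log x) ≤ y / x - x / y
      have h2 : x * y * (2 * (Real.log y - Real.log x)) ≤ x * y * (y / x - x / y) :=
        mul_le_mul_of_nonneg_left h (by positivity)
      have h3 : x * y * (y / x - x / y) = y ^ 2 - x ^ 2 := by field_simp
      rw [h3] at h2
      -- goal : (x-y)^2/2 ≤ x*(log x - log y) - x + y
      nlinarith [mul_nonneg (sub_nonneg.2 hy1) (sq_nonneg (x - y)), hy0, hx0']
    · -- y ≤ x : use pade_le_log with t = x / y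
      have ht : 1 ≤ x / y := (one_le_div hy0).2 hxy
      have h := pade_le_log ht
      rw [Real.log_div hx0'.ne' hy0.ne'] at h
      have hyy : 2 * (x / y - 1) / (x / y + 1) = 2 * (x - y) / (x + y) := by
        rw [div_eq_div_iff (by positivity) (by positivity)]
        field_simp
      rw [hyy] at h
      have hxy2 : (0:ℝ) < x + y := by linarith
      have h2 : 2 * (x - y) ≤ (x + y) * (Real.log x - Real.log y) := by
        rw [div_le_iff₀ hxy2] at h; linarith [h]
      have h3 := mul_le_mul_of_nonneg_left h2 hx0
      -- h3 : x * (2*(x-y)) ≤ x * ((x+y)*(log x - log y))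
      nlinarith [mul_nonneg (mul_nonneg (sub_nonneg.2 (by linarith : x + y ≤ 2)) (sub_nonneg.2 hxy)) (sub_nonneg.2 hxy), hy0, hx0']
theorem stmt4 {n m : ℕ} (a : Fin n → ℝ) (b : Fin m → ℝ)
    (ha : (∀ i, 0 ≤ a i) ∧ ∑ i, a i = 1) (hb : (∀ j, 0 ≤ b j) ∧ ∑ j, b j = 1)
    (C : Matrix (Fin n) (Fin m) ℝ)
    (P : ℝ → Matrix (Fin n) (Fin m) ℝ)
    (hP : ∀ ε > (0:ℝ), P ε ∈ couplings a b ∧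
      ∀ Q ∈ couplings a b,
        dotp (P ε) C - ε * entropy (P ε) ≤ dotp Q C - ε * entropy Q) :
    Tendsto P atTop (nhds (Matrix.of fun i j => a i * b j)) := by
  obtain ⟨ha0, ha1⟩ := ha
  obtain ⟨hb0, hb1⟩ := hb
  have haLe : ∀ i, a i ≤ 1 := fun i => by
    calc a i ≤ ∑ i', a i' := Finset.single_le_sum (fun i' _ => ha0 i') (mem_univ i)
    _ = 1 := ha1
  have hbLe : ∀ j, b j ≤ 1 := fun j => by
    calc b j ≤ ∑ j', b j' := Finset.single_le_sum (fun j' _ => hb0 j') (mem_univ j)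
    _ = 1 := hb1
  set Qm : Matrix (Fin n) (Fin m) ℝ := Matrix.of fun i j => a i * b j with hQm
  have hQapp : ∀ i j, Qm i j = a i * b j := fun i j => rfl
  have hQ : Qm ∈ couplings a b := by
    refine ⟨fun i j => mul_nonneg (ha0 i) (hb0 j), fun i => ?_, fun j => ?_⟩
    · simp only [hQapp, ← Finset.mul_sum, hb1, mul_one]
    · simp only [hQapp, ← Finset.sum_mul, ha1, one_mul]
  have hle1 : ∀ R ∈ couplings a b, ∀ i j, R i j ≤ 1 := by
    intro R hR i j
    calc R i j ≤ ∑ j', R i j' := Finset.single_le_sum (fun j' _ => hR.1 i j') (mem_univ j)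
    _ = a i := hR.2.1 i
    _ ≤ 1 := haLe i
  -- entropy rewrite
  have hent : ∀ R ∈ couplings a b,
      entropy R = -(∑ i, ∑ j, R i j * Real.log (R i j)) + 1 := by
    intro R hR
    unfold entropy
    have h1 : ∀ i j, R i j * (Real.log (R i j) - 1)
        = R i j * Real.log (R i j) - R i j := fun i j => by ring
    simp_rw [h1, Finset.sum_sub_distrib]
    have h2 : ∑ i, ∑ j, R i j = 1 := by simp_rw [hR.2.1]; exact ha1
    rw [h2]; ring
  -- quantitative Gibbs
  have gibbs : ∀ R ∈ couplings a b,
      (∑ i, ∑ j, (R i j - a i * b j) ^ 2) / 2 ≤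
        (∑ i, ∑ j, R i j * Real.log (R i j))
          - (∑ i, ∑ j, (a i * b j) * Real.log (a i * b j)) := by
    intro R hR
    have hzr : ∀ i j, a i = 0 → R i j = 0 := by
      intro i j h
      have h0 : ∑ j', R i j' = 0 := by rw [hR.2.1 i, h]
      exact (Finset.sum_eq_zero_iff_of_nonneg (fun j' _ => hR.1 i j')).1 h0 j (mem_univ j)
    have hzc : ∀ i j, b j = 0 → R i j = 0 := by
      intro i j h
      have h0 : ∑ i', R i' j = 0 := by rw [hR.2.2 j, h]
      exact (Finset.sum_eq_zero_iff_of_nonneg (fun i' _ => hR.1 i' j)).1 h0 i (mem_univ i)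
    have per : ∀ i j, (R i j - a i * b j) ^ 2 / 2 ≤
        R i j * Real.log (R i j) - (a i * b j) * Real.log (a i * b j)
          - (Real.log (a i) + Real.log (b j) + 1) * (R i j - a i * b j) := by
      intro i j
      rcases eq_or_lt_of_le (ha0 i) with hai | hai
      · have h1 : R i j = 0 := hzr i j hai.symm
        simp [h1, ← hai]
      rcases eq_or_lt_of_le (hb0 j) with hbj | hbj
      · have h1 : R i j = 0 := hzc i j hbj.symm
        simp [h1, ← hbj]
      have hy0 : 0 < a i * b j := mul_pos hai hbj
      have hy1 : a i * b j ≤ 1 := by nlinarith [haLe i, hbLe j, ha0 i, hb0 j]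
      have hk := key_ineq (hR.1 i j) (hle1 R hR i j) hy0 hy1
      rw [Real.log_mul hai.ne' hbj.ne'] at hk ⊢
      exact hk
    have hsum := Finset.sum_le_sum (fun i (_ : i ∈ univ) =>
      Finset.sum_le_sum (fun j (_ : j ∈ univ) => per i j))
    have hlin : ∑ i, ∑ j, (Real.log (a i) + Real.log (b j) + 1) * (R i j - a i * b j) = 0 := by
      have hsplit : ∀ i j, (Real.log (a i) + Real.log (b j) + 1) * (R i j - a i * b j)
          = Real.log (a i) * (R i j - a i * b j) + Real.log (b j) * (R i j - a i * b j)
            + (R i j - a i * b j) := fun i j => by ring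
      simp_rw [hsplit, Finset.sum_add_distrib]
      have e1 : ∑ i, ∑ j, Real.log (a i) * (R i j - a i * b j) = 0 := by
        apply Finset.sum_eq_zero; intro i _
        rw [← Finset.mul_sum, Finset.sum_sub_distrib, hR.2.1 i, ← Finset.mul_sum, hb1,
          mul_one, sub_self, mul_zero]
      have e2 : ∑ i, ∑ j, Real.log (b j) * (R i j - a i * b j) = 0 := by
        rw [Finset.sum_comm]
        apply Finset.sum_eq_zero; intro j _
        rw [← Finset.mul_sum, Finset.sum_sub_distrib, hR.2.2 j, ← Finset.sum_mul, ha1,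
          one_mul, sub_self, mul_zero]
      have e3 : ∑ i, ∑ j, (R i j - a i * b j) = 0 := by
        apply Finset.sum_eq_zero; intro i _
        rw [Finset.sum_sub_distrib, hR.2.1 i, ← Finset.mul_sum, hb1, mul_one, sub_self]
      rw [e1, e2, e3]; ring
    simp_rw [← Finset.sum_div, Finset.sum_sub_distrib] at hsum
    linarith [hsum, hlin]
  -- cost bound
  set M : ℝ := ∑ i, ∑ j, |C i j| with hM
  have hdot : ∀ R ∈ couplings a b, |dotp R C| ≤ M := by
    intro R hR
    unfold dotp
    calc |∑ i, ∑ j, R i j * C i j| ≤ ∑ i, |∑ j, R i j * C i j| :=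
        Finset.abs_sum_le_sum_abs _ _
    _ ≤ ∑ i, ∑ j, |R i j * C i j| :=
        Finset.sum_le_sum (fun i _ => Finset.abs_sum_le_sum_abs _ _)
    _ ≤ M := by
        apply Finset.sum_le_sum; intro i _; apply Finset.sum_le_sum; intro j _
        rw [abs_mul, abs_of_nonneg (hR.1 i j)]
        exact mul_le_of_le_one_left (abs_nonneg _) (hle1 R hR i j)
  -- entrywise quantitative bound
  have hbound : ∀ ε : ℝ, 0 < ε → ∀ i j, (P ε i j - a i * b j) ^ 2 ≤ 4 * M / ε := by
    intro ε hε i j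
    obtain ⟨hPc, hmin⟩ := hP ε hε
    have h1 := hmin Qm hQ
    rw [hent (P ε) hPc, hent Qm hQ] at h1
    have hQS : (∑ i', ∑ j', Qm i' j' * Real.log (Qm i' j'))
        = ∑ i', ∑ j', (a i' * b j') * Real.log (a i' * b j') := rfl
    rw [hQS] at h1
    have d1 := abs_le.1 (hdot (P ε) hPc)
    have d2 := abs_le.1 (hdot Qm hQ)
    have h2 : ε * ((∑ i', ∑ j', P ε i' j' * Real.log (P ε i' j'))
        - (∑ i', ∑ j', (a i' * b j') * Real.log (a i' * b j'))) ≤ 2 * M := by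
      nlinarith [h1, d1.1, d1.2, d2.1, d2.2]
    have h3 := gibbs (P ε) hPc
    have h4 : (P ε i j - a i * b j) ^ 2 ≤ ∑ i', ∑ j', (P ε i' j' - a i' * b j') ^ 2 := by
      calc (P ε i j - a i * b j) ^ 2 ≤ ∑ j', (P ε i j' - a i * b j') ^ 2 :=
          Finset.single_le_sum (f := fun j' => (P ε i j' - a i * b j') ^ 2)
            (fun j' _ => sq_nonneg _) (mem_univ j)
      _ ≤ ∑ i', ∑ j', (P ε i' j' - a i' * b j') ^ 2 :=
          Finset.single_le_sum (f := fun i' => ∑ j', (P ε i' j' - a i' * b j') ^ 2)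
            (fun i' _ => Finset.sum_nonneg fun j' _ => sq_nonneg _) (mem_univ i)
    have h5 : (∑ i', ∑ j', P ε i' j' * Real.log (P ε i' j'))
        - (∑ i', ∑ j', (a i' * b j') * Real.log (a i' * b j')) ≤ 2 * M / ε := by
      rw [le_div_iff₀ hε]; nlinarith [h2]
    rw [le_div_iff₀ hε] at h5 ⊢
    nlinarith [h3, h4, h5, hε.le, mul_le_mul_of_nonneg_right h4 hε.le,
      mul_le_mul_of_nonneg_right h3 hε.le]
  -- topology
  apply tendsto_pi_nhds.2; intro i; apply tendsto_pi_nhds.2; intro j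
  have hgoal : Tendsto (fun ε => P ε i j) atTop (nhds (a i * b j)) := by
    rw [tendsto_iff_dist_tendsto_zero]
    have hub : ∀ᶠ ε in atTop, dist (P ε i j) (a i * b j) ≤ Real.sqrt (4 * M / ε) := by
      filter_upwards [eventually_ge_atTop (1:ℝ)] with ε hε
      rw [Real.dist_eq]
      exact Real.abs_le_sqrt (hbound ε (by linarith) i j)
    have l1 : Tendsto (fun ε : ℝ => 4 * M / ε) atTop (nhds 0) :=
      Tendsto.div_atTop tendsto_const_nhds tendsto_id
    have l2 : Tendsto (fun ε : ℝ => Real.sqrt (4 * M / ε)) atTop (nhds 0) := by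
      have := (Real.continuous_sqrt.tendsto 0).comp l1
      simpa [Function.comp_def, Real.sqrt_zero] using this
    exact squeeze_zero' (Eventually.of_forall (fun ε => dist_nonneg)) hub l2
  exact hgoal
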